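/- Let ℝ³ = Fin 3 → ℝ with cross product ×. Let d, g : ℝ → ℝ³, let μ, β̂ : ℝ → ℝ, let α ∈ ℝ, let t, m ∈ ℝ³, and let g_t, g_m, G ∈ ℝ with g_t ^ 2 + g_m ^ 2 = 1. Assume: d is differentiable at α and at μ α; μ, β̂, g are differentiable at α; d (μ s) = d s + β̂ s • g s for all s in some neighborhood of α; deriv d α = t; g α = g_t • t + g_m • m; and deriv g α = −G • (g_m • t − g_t • m). Then deriv μ α • ((deriv d (μ α)) × g α) = (g_m − β̂ α * G) • (t × m). -/

import Mathlib

open Matrix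

/-- Equation (muTcond1) of the paper: differentiating the ruling-endpoint
relation `d(μ(s)) = d(s) + β̂(s) g(s)` and crossing with `g(α)` yields
`μ'(α) (d'(μ(α)) × g(α)) = (g_m − β̂(α)G) (t × m)`, where `t = d'(α)`,
`g(α) = g_t t + g_m m` with `g_t² + g_m² = 1`, and
`g'(α) = −G(g_m t − g_t m)`. -/
theorem stmt10
    (d g : ℝ → Fin 3 → ℝ) (μ βh : ℝ → ℝ) (α : ℝ)
    (t m : Fin 3 → ℝ) (gt gm G : ℝ) (hunit : gt ^ 2 + gm ^ 2 = 1)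
    (hd : DifferentiableAt ℝ d α) (hdμ : DifferentiableAt ℝ d (μ α))
    (hμ : DifferentiableAt ℝ μ α) (hβ : DifferentiableAt ℝ βh α)
    (hgdiff : DifferentiableAt ℝ g α)
    (hrel : ∀ᶠ s in nhds α, d (μ s) = d s + βh s • g s)
    (hderivd : deriv d α = t)
    (hgα : g α = gt • t + gm • m)
    (hg' : deriv g α = -G • (gm • t - gt • m)) :
    deriv μ α • ((deriv d (μ α)) ⨯₃ g α) = (gm - βh α * G) • (t ⨯₃ m) := by
  have h1 : HasDerivAt (fun s => d (μ s)) (deriv μ α • deriv d (μ α)) α :=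
    HasDerivAt.scomp α hdμ.hasDerivAt hμ.hasDerivAt
  have h2 : HasDerivAt (fun s => d s + βh s • g s)
      (deriv d α + (βh α • deriv g α + deriv βh α • g α)) α :=
    hd.hasDerivAt.add (hβ.hasDerivAt.smul hgdiff.hasDerivAt)
  have h2' : HasDerivAt (fun s => d (μ s))
      (deriv d α + (βh α • deriv g α + deriv βh α • g α)) α :=
    h2.congr_of_eventuallyEq hrel
  have key : deriv μ α • deriv d (μ α)
      = deriv d α + (βh α • deriv g α + deriv βh α • g α) := h1.unique h2'
  have hcross : deriv μ α • ((deriv d (μ α)) ⨯₃ g α)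
      = (deriv μ α • deriv d (μ α)) ⨯₃ g α := by
    rw [LinearMap.map_smul, LinearMap.smul_apply]
  rw [hcross, key, hderivd, hg', hgα]
  simp only [map_add, _root_.map_smul, map_sub, map_neg, LinearMap.add_apply,
    LinearMap.smul_apply, LinearMap.sub_apply, LinearMap.neg_apply,
    cross_self]
  have htt : t ⨯₃ t = 0 := cross_self t
  have hmm : m ⨯₃ m = 0 := cross_self m
  have hmt : m ⨯₃ t = -(t ⨯₃ m) := by rw [← cross_anticomm]
  simp only [htt, hmm, hmt, smul_zero, smul_neg, zero_add, add_zero]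
  have hu : gt * gt + gm * gm = 1 := by nlinarith [hunit]
  match_scalars
  linear_combination (-(βh α * G)) * hunit
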